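/- Let P be an n-dimensional polyhedral cone in ℝⁿ, f a face of P, and e a face of f. With f_{(e;P)} = Lk(e;P) ∩ L(f), the link of f in P equals the link of f_{(e;P)} in Lk(e;P): Lk(f;P) = Lk(f_{(e;P)}; Lk(e;P)). -/

import Mathlib

open scoped RealInnerProductSpace

/-- The link `Lk(g;P)` of a face `g` of the polyhedral cone `P = ⋂ᵢ {x | ⟪u i, x⟫ ≤ 0}`. -/
def lkCone (n m : ℕ) (u : Fin m → EuclideanSpace ℝ (Fin n))
    (g : Set (EuclideanSpace ℝ (Fin n))) : Set (EuclideanSpace ℝ (Fin n)) :=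
  (⋂ i ∈ {i : Fin m | ∀ x ∈ g, ⟪u i, x⟫ = 0}, {x : EuclideanSpace ℝ (Fin n) | ⟪u i, x⟫ ≤ 0}) ∩
    ((Submodule.span ℝ g)ᗮ : Set (EuclideanSpace ℝ (Fin n)))

/-- A (nonempty, proper) face of a convex cone `C ⊆ ℝⁿ`. -/
def IsFaceCone (n : ℕ) (C f : Set (EuclideanSpace ℝ (Fin n))) : Prop :=
  f.Nonempty ∧ f ≠ C ∧ ∃ w : EuclideanSpace ℝ (Fin n), w ≠ 0 ∧
    (∀ x ∈ C, ⟪w, x⟫ ≤ 0) ∧ f = {x ∈ C | ⟪w, x⟫ = 0}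

/-- Inner product vanishing on a set extends to its span. -/
lemma innerSpanZero {n : ℕ} {s : Set (EuclideanSpace ℝ (Fin n))} {v : EuclideanSpace ℝ (Fin n)}
    (h : ∀ y ∈ s, ⟪v, y⟫ = 0) : ∀ y ∈ Submodule.span ℝ s, ⟪v, y⟫ = 0 := by
  intro y hy
  induction hy using Submodule.span_induction with
  | mem x hx => exact h x hx
  | zero => simp
  | add x z _ _ hx hz => rw [inner_add_right, hx, hz]; ring
  | smul c x _ hx => rw [real_inner_smul_right, hx]; ring

lemma memPerpIff {n : ℕ} {s : Set (EuclideanSpace ℝ (Fin n))} {x : EuclideanSpace ℝ (Fin n)} :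
    x ∈ (Submodule.span ℝ s)ᗮ ↔ ∀ y ∈ s, ⟪x, y⟫ = 0 := by
  rw [Submodule.mem_orthogonal']
  exact ⟨fun h y hy => h y (Submodule.subset_span hy), fun h => innerSpanZero h⟩

/-- For an `n`-dimensional polyhedral cone `P ⊆ ℝⁿ` given by an irredundant
family of halfspaces, a face `f` of `P` and a face `e` of `f`, writing
`fe = f_{(e;P)} = Lk(e;P) ∩ L(f)`, the link of `f` in `P` equals the link of `fe` in
`Lk(e;P)`, the latter being formed from the defining halfspaces `Hᵢ⁺ ∩ L(e)^⊥` of `Lk(e;P)`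
whose bounding hyperplane contains `fe`, intersected with `L(fe)^⊥`. -/
theorem stmt14 (n m : ℕ) (u : Fin m → EuclideanSpace ℝ (Fin n)) (hu : ∀ i, u i ≠ 0)
    (P : Set (EuclideanSpace ℝ (Fin n)))
    (hP : P = ⋂ i, {x : EuclideanSpace ℝ (Fin n) | ⟪u i, x⟫ ≤ 0})
    (hirr : ∀ i : Fin m,
      (⋂ j ∈ {j : Fin m | j ≠ i}, {x : EuclideanSpace ℝ (Fin n) | ⟪u j, x⟫ ≤ 0}) ≠ P)
    (hfull : Submodule.span ℝ P = ⊤)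
    (f e : Set (EuclideanSpace ℝ (Fin n)))
    (hf : IsFaceCone n P f) (he : IsFaceCone n f e)
    (fe : Set (EuclideanSpace ℝ (Fin n)))
    (hfe : fe = lkCone n m u e ∩ (Submodule.span ℝ f : Set (EuclideanSpace ℝ (Fin n)))) :
    lkCone n m u f =
      (⋂ i ∈ {i : Fin m | (∀ x ∈ e, ⟪u i, x⟫ = 0) ∧ ∀ x ∈ fe, ⟪u i, x⟫ = 0},
        ({x : EuclideanSpace ℝ (Fin n) | ⟪u i, x⟫ ≤ 0} ∩
          ((Submodule.span ℝ e)ᗮ : Set (EuclideanSpace ℝ (Fin n))))) ∩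
      ((Submodule.span ℝ fe)ᗮ : Set (EuclideanSpace ℝ (Fin n))) := by
  obtain ⟨⟨p, hpf⟩, hfP, w, hw0, hwP, hfdef⟩ := hf
  obtain ⟨_, _, _, _, _, hedef⟩ := he
  have hfsubP : f ⊆ P := by rw [hfdef]; exact fun x hx => hx.1
  have hesubf : e ⊆ f := by rw [hedef]; exact fun x hx => hx.1
  have hPle : ∀ x ∈ P, ∀ i, ⟪u i, x⟫ ≤ 0 := by
    intro x hx i
    rw [hP] at hx
    exact Set.mem_iInter.mp hx i
  have hfw : ∀ x ∈ f, ⟪w, x⟫ = 0 := by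
    intro x hx; rw [hfdef] at hx; exact hx.2
  -- Step 1: there is an index whose hyperplane contains f.
  have hS : ∃ i₀ : Fin m, ∀ y ∈ f, ⟪u i₀, y⟫ = 0 := by
    by_contra hcon
    push_neg at hcon
    choose z hz hz0 using hcon
    set y := p + ∑ i, z i with hy
    have hstrict : ∀ i, ⟪u i, y⟫ < 0 := by
      intro i
      rw [hy, inner_add_right, inner_sum]
      have h1 : ⟪u i, p⟫ ≤ 0 := hPle p (hfsubP hpf) i
      have h2 : (∑ j, ⟪u i, z j⟫) < ∑ _j : Fin m, (0 : ℝ) := by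
        refine Finset.sum_lt_sum (fun j _ => hPle (z j) (hfsubP (hz j)) i) ⟨i, Finset.mem_univ i, ?_⟩
        exact lt_of_le_of_ne (hPle (z i) (hfsubP (hz i)) i) (hz0 i)
      rw [Finset.sum_const_zero] at h2
      linarith
    have hwy : ⟪w, y⟫ = 0 := by
      rw [hy, inner_add_right, inner_sum, hfw p hpf]
      rw [Finset.sum_congr rfl (fun j _ => hfw (z j) (hz j))]
      simp
    -- choose a small positive ε
    set F : Finset ℝ := insert (1 : ℝ)
      (Finset.univ.image fun i => -⟪u i, y⟫ / (|⟪u i, w⟫| + 1)) with hF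
    have hFne : F.Nonempty := ⟨1, Finset.mem_insert_self _ _⟩
    set ε := F.min' hFne with hε
    have hεpos : 0 < ε := by
      apply (Finset.lt_min'_iff F hFne).mpr
      intro r hr
      rcases Finset.mem_insert.mp hr with h | h
      · rw [h]; norm_num
      · obtain ⟨i, _, hi⟩ := Finset.mem_image.mp h
        rw [← hi]
        exact div_pos (by linarith [hstrict i]) (by positivity)
    have hεle : ∀ i, ε ≤ -⟪u i, y⟫ / (|⟪u i, w⟫| + 1) := by
      intro i
      exact F.min'_le _ (Finset.mem_insert_of_mem
        (Finset.mem_image.mpr ⟨i, Finset.mem_univ i, rfl⟩))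
    have hyP : y + ε • w ∈ P := by
      rw [hP, Set.mem_iInter]
      intro i
      show ⟪u i, y + ε • w⟫ ≤ 0
      rw [inner_add_right, real_inner_smul_right]
      have h3 : ε * (|⟪u i, w⟫| + 1) ≤ -⟪u i, y⟫ := by
        have := hεle i
        rw [le_div_iff₀ (by positivity)] at this
        linarith
      have h4 : ε * ⟪u i, w⟫ ≤ ε * (|⟪u i, w⟫| + 1) :=
        mul_le_mul_of_nonneg_left (by linarith [le_abs_self ⟪u i, w⟫]) hεpos.le
      linarith
    have h5 : ⟪w, y + ε • w⟫ ≤ 0 := hwP _ hyP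
    rw [inner_add_right, real_inner_smul_right, hwy] at h5
    have h6 : 0 < ⟪w, w⟫ := by rw [real_inner_self_eq_norm_sq]; exact pow_pos (norm_pos_iff.mpr hw0) 2
    nlinarith
  -- Step 2: every point of f decomposes as (span e) part plus fe part.
  have hdecomp : ∀ x ∈ f, ∃ a ∈ Submodule.span ℝ e, x - a ∈ fe := by
    intro x hx
    set E := Submodule.span ℝ e with hE
    refine ⟨(E.orthogonalProjection x : EuclideanSpace ℝ (Fin n)), (E.orthogonalProjection x).2, ?_⟩
    rw [hfe]
    constructor
    · constructor
      · rw [Set.mem_iInter₂]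
        intro i hi
        show ⟪u i, x - _⟫ ≤ 0
        rw [inner_sub_right, innerSpanZero hi _ (E.orthogonalProjection x).2, sub_zero]
        exact hPle x (hfsubP hx) i
      · exact Submodule.sub_starProjection_mem_orthogonal (K := E) x
    · exact Submodule.sub_mem _ (Submodule.subset_span hx)
        (Submodule.span_mono hesubf (E.orthogonalProjection x).2)
  -- Step 3: the key equivalence of orthogonality conditions.
  have hkey : ∀ v : EuclideanSpace ℝ (Fin n),
      (∀ y ∈ f, ⟪v, y⟫ = 0) ↔ ((∀ y ∈ e, ⟪v, y⟫ = 0) ∧ ∀ y ∈ fe, ⟪v, y⟫ = 0) := by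
    intro v
    constructor
    · intro h
      refine ⟨fun y hy => h y (hesubf hy), fun y hy => ?_⟩
      rw [hfe] at hy
      exact innerSpanZero h y hy.2
    · rintro ⟨h1, h2⟩ y hy
      obtain ⟨a, ha, hb⟩ := hdecomp y hy
      have : y = a + (y - a) := by abel
      rw [this, inner_add_right, innerSpanZero h1 a ha, h2 _ hb]
      ring
  obtain ⟨i₀, hi₀⟩ := hS
  ext x
  simp only [lkCone, Set.mem_inter_iff, Set.mem_iInter, Set.mem_setOf_eq, SetLike.mem_coe]
  constructor
  · rintro ⟨h1, h2⟩
    have hxf : ∀ y ∈ f, ⟪x, y⟫ = 0 := memPerpIff.mp h2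
    obtain ⟨hxe, hxfe⟩ := (hkey x).mp hxf
    exact ⟨fun i hi => ⟨h1 i ((hkey (u i)).mpr hi), memPerpIff.mpr hxe⟩,
      memPerpIff.mpr hxfe⟩
  · rintro ⟨h1, h2⟩
    have hxE := (h1 i₀ ((hkey (u i₀)).mp hi₀)).2
    refine ⟨fun i hif => (h1 i ((hkey (u i)).mp hif)).1, ?_⟩
    exact memPerpIff.mpr ((hkey x).mpr ⟨memPerpIff.mp hxE, memPerpIff.mp h2⟩)
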